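/- Let q₀ = 2^h with h ≥ 1, q = 2q₀², and let S = ⟨q, q+q₀, q+2q₀, q+2q₀+1⟩ be the Suzuki semigroup. Then S = {λ₁ q + λ₂ q₀ + λ₃ : λ₁, λ₂, λ₃ ∈ ℕ, 0 ≤ 2λ₃ ≤ λ₂ ≤ 2λ₁}. -/

import Mathlib

/-- σ(x) = x/2 - |S ∩ [0,x]| + 1 -/
noncomputable def sig (S : Set ℕ) (x : ℕ) : ℚ :=
  (x : ℚ) / 2 - ((S ∩ Set.Icc 0 x).ncard : ℚ) + 1

/-- ngCond: least c with [c,∞) ⊆ S -/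
noncomputable def ngCond (S : Set ℕ) : ℕ := sInf {k : ℕ | ∀ n, k ≤ n → n ∈ S}

theorem stmt16 (h q0 q : ℕ) (hh : 1 ≤ h) (hq0 : q0 = 2 ^ h) (hq : q = 2 * q0 ^ 2) :
    ∀ n : ℕ,
      n ∈ AddSubmonoid.closure ({q, q + q0, q + 2 * q0, q + 2 * q0 + 1} : Set ℕ) ↔
      ∃ l1 l2 l3 : ℕ, 2 * l3 ≤ l2 ∧ l2 ≤ 2 * l1 ∧ n = l1 * q + l2 * q0 + l3 := by
  set C := AddSubmonoid.closure ({q, q + q0, q + 2 * q0, q + 2 * q0 + 1} : Set ℕ) with hC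
  intro n
  constructor
  · intro hn
    induction hn using AddSubmonoid.closure_induction with
    | mem x hx =>
      simp only [Set.mem_insert_iff, Set.mem_singleton_iff] at hx
      rcases hx with rfl | rfl | rfl | rfl
      · exact ⟨1, 0, 0, by omega, by omega, by ring⟩
      · exact ⟨1, 1, 0, by omega, by omega, by ring⟩
      · exact ⟨1, 2, 0, by omega, by omega, by ring⟩
      · exact ⟨1, 2, 1, by omega, by omega, by ring⟩
    | zero => exact ⟨0, 0, 0, by omega, by omega, by ring⟩
    | add a b _ _ ha hb =>
      obtain ⟨a1, a2, a3, h1, h2, rfl⟩ := ha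
      obtain ⟨b1, b2, b3, g1, g2, rfl⟩ := hb
      exact ⟨a1 + b1, a2 + b2, a3 + b3, by omega, by omega, by ring⟩
  · rintro ⟨l1, l2, l3, h1, h2, rfl⟩
    have m1 : q ∈ C := AddSubmonoid.subset_closure (by simp)
    have m2 : q + q0 ∈ C := AddSubmonoid.subset_closure (by simp)
    have m3 : q + 2 * q0 ∈ C := AddSubmonoid.subset_closure (by simp)
    have m4 : q + 2 * q0 + 1 ∈ C := AddSubmonoid.subset_closure (by simp)
    have key : ∀ a b c d : ℕ,
        a * q + b * (q + q0) + c * (q + 2 * q0) + d * (q + 2 * q0 + 1) ∈ C := by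
      intro a b c d
      exact add_mem (add_mem (add_mem (by simpa using nsmul_mem m1 a)
        (by simpa using nsmul_mem m2 b))
        (by simpa using nsmul_mem m3 c))
        (by simpa using nsmul_mem m4 d)
    obtain ⟨a, b, c, d, ha, hb', hd⟩ :
        ∃ a b c d : ℕ, a + b + c + d = l1 ∧ b + 2 * c + 2 * d = l2 ∧ d = l3 :=
      ⟨l1 - (l2 - 2 * l3) / 2 - (l2 - 2 * l3) % 2 - l3, (l2 - 2 * l3) % 2,
        (l2 - 2 * l3) / 2, l3, by omega, by omega, rfl⟩
    have : l1 * q + l2 * q0 + l3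
        = a * q + b * (q + q0) + c * (q + 2 * q0) + d * (q + 2 * q0 + 1) := by
      subst ha hb' hd; ring
    rw [this]
    exact key a b c d
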